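/- Let R be an ℕ-graded ring whose degree-zero part R₀ is a field, with homogeneous maximal ideal 𝔪. Let M and N be graded R-modules, with M and N finitely generated and N torsion-free. If there exists a morphism φ : M_𝔪 → N_𝔪 of R_𝔪-modules, then there exists a morphism φ̃ : M → N of R-modules (a finite sum of graded homogeneous morphisms) such that φ̃ ⊗_R R_𝔪 agrees with φ up to multiplication by a unit of R_𝔪. -/

import Mathlib

set_option synthInstance.maxHeartbeats 1000000
set_option maxHeartbeats 1000000
open DirectSum

section GradedAux

variable {R M N : Type} [CommRing R] [AddCommGroup M] [Module R M]
    [AddCommGroup N] [Module R N]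
    (𝒜 : ℤ → AddSubgroup R) [GradedRing 𝒜]
    (ℳ : ℤ → AddSubgroup M) (𝒩 : ℤ → AddSubgroup N)
    [DirectSum.Decomposition ℳ] [DirectSum.Decomposition 𝒩]
    [SetLike.GradedSMul 𝒜 ℳ] [SetLike.GradedSMul 𝒜 𝒩]

lemma aux_decompose_smul {d : ℤ} {r : R} (hr : r ∈ 𝒜 d) (x : N) (n : ℤ) :
    (decompose 𝒩 (r • x) n : N) = r • (decompose 𝒩 x (n - d) : N) := by
  induction x using DirectSum.Decomposition.inductionOn 𝒩 with
  | zero => simp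
  | @homogeneous k x =>
    have hmem : r • (x : N) ∈ 𝒩 (d + k) := SetLike.GradedSMul.smul_mem hr x.2
    by_cases h : n = d + k
    · subst h
      rw [decompose_of_mem_same 𝒩 hmem, decompose_of_mem_same 𝒩 (show (x:N) ∈ 𝒩 (d+k-d) by simpa using x.2)]
    · rw [decompose_of_mem_ne 𝒩 hmem (fun hh => h hh.symm),
        decompose_of_mem_ne 𝒩 x.2 (show k ≠ n - d by omega), smul_zero]
  | add a b ha hb =>
    rw [smul_add, decompose_add, DirectSum.add_apply, AddSubgroup.coe_add, ha, hb,
      decompose_add, DirectSum.add_apply, AddSubgroup.coe_add, smul_add]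

/-- The degree-`i` homogeneous component of a map `f : M →ₗ[R] N`, as an
additive monoid hom. -/
noncomputable def psiAux (f : M →ₗ[R] N) (i : ℤ) : M →+ N :=
  (DFinsupp.sumAddHom fun j : ℤ =>
    (((𝒩 (j + i)).subtype.comp
      ((DFinsupp.evalAddMonoidHom (j + i)).comp
        (DirectSum.decomposeAddEquiv 𝒩).toAddMonoidHom)).comp
      (f.toAddMonoidHom.comp (ℳ j).subtype))).comp
    (DirectSum.decomposeAddEquiv ℳ).toAddMonoidHom

lemma psiAux_apply_of_mem (f : M →ₗ[R] N) (i : ℤ) {j : ℤ} {x : M} (hx : x ∈ ℳ j) :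
    psiAux ℳ 𝒩 f i x = (decompose 𝒩 (f x) (j + i) : N) := by
  have h1 : psiAux ℳ 𝒩 f i x =
      DFinsupp.sumAddHom (fun j : ℤ =>
        (((𝒩 (j + i)).subtype.comp
          ((DFinsupp.evalAddMonoidHom (j + i)).comp
            (DirectSum.decomposeAddEquiv 𝒩).toAddMonoidHom)).comp
          (f.toAddMonoidHom.comp (ℳ j).subtype))) (decompose ℳ x) := rfl
  rw [h1, decompose_of_mem ℳ hx,
    show (DirectSum.of (fun j => ℳ j) j ⟨x, hx⟩) = DFinsupp.single j ⟨x, hx⟩ from rfl,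
    DFinsupp.sumAddHom_single]
  rfl

include 𝒜

lemma psiAux_smul (f : M →ₗ[R] N) (i : ℤ) (r : R) (m : M) :
    psiAux ℳ 𝒩 f i (r • m) = r • psiAux ℳ 𝒩 f i m := by
  induction r using DirectSum.Decomposition.inductionOn 𝒜 generalizing m with
  | zero => simp
  | @homogeneous d r =>
    induction m using DirectSum.Decomposition.inductionOn ℳ with
    | zero => simp
    | @homogeneous k x =>
      have hmem : (r : R) • (x : M) ∈ ℳ (d + k) := SetLike.GradedSMul.smul_mem r.2 x.2
      rw [psiAux_apply_of_mem ℳ 𝒩 f i hmem, psiAux_apply_of_mem ℳ 𝒩 f i x.2,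
        map_smul, aux_decompose_smul 𝒜 𝒩 r.2,
        show d + k + i - d = k + i by ring]
    | add a b ha hb => rw [smul_add, map_add, map_add, ha, hb, smul_add]
  | add r r' hr hr' => rw [add_smul, map_add, hr, hr', add_smul]

/-- The degree-`i` homogeneous component of `f`, as a linear map. -/
noncomputable def psi (f : M →ₗ[R] N) (i : ℤ) : M →ₗ[R] N :=
  { psiAux ℳ 𝒩 f i with map_smul' := psiAux_smul 𝒜 ℳ 𝒩 f i }

lemma psi_apply_of_mem (f : M →ₗ[R] N) (i : ℤ) {j : ℤ} {x : M} (hx : x ∈ ℳ j) :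
    psi 𝒜 ℳ 𝒩 f i x = (decompose 𝒩 (f x) (j + i) : N) :=
  psiAux_apply_of_mem ℳ 𝒩 f i hx

lemma psi_mem (f : M →ₗ[R] N) (i : ℤ) {j : ℤ} {x : M} (hx : x ∈ ℳ j) :
    psi 𝒜 ℳ 𝒩 f i x ∈ 𝒩 (j + i) := by
  rw [psi_apply_of_mem 𝒜 ℳ 𝒩 f i hx]; exact SetLike.coe_mem _

lemma psi_sum (f : M →ₗ[R] N) (m : M) (s : Finset ℤ)
    (hs : ∀ j n : ℤ, ((decompose ℳ m j : M)) ≠ 0 →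
      (decompose 𝒩 (f (decompose ℳ m j)) n : N) ≠ 0 → n - j ∈ s) :
    ∑ i ∈ s, psi 𝒜 ℳ 𝒩 f i m = f m := by
  classical
  -- express each psi i m as a sum over the support of decompose ℳ m
  have hpsi : ∀ i : ℤ, psi 𝒜 ℳ 𝒩 f i m =
      ∑ j ∈ (decompose ℳ m).support, (decompose 𝒩 (f (decompose ℳ m j)) (j + i) : N) := by
    intro i
    conv_lhs => rw [← DirectSum.sum_support_decompose ℳ m]
    rw [map_sum]
    exact Finset.sum_congr rfl fun j _ => psi_apply_of_mem 𝒜 ℳ 𝒩 f i (SetLike.coe_mem _)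
  rw [Finset.sum_congr rfl fun i _ => hpsi i, Finset.sum_comm]
  conv_rhs => rw [← DirectSum.sum_support_decompose ℳ m, map_sum]
  refine Finset.sum_congr rfl fun j hj => ?_
  -- inner sum over i ∈ s of components (j+i) equals f (m_j)
  have h1 : ∑ i ∈ s, (decompose 𝒩 (f (decompose ℳ m j)) (j + i) : N)
      = ∑ n ∈ s.image (fun i => j + i), (decompose 𝒩 (f (decompose ℳ m j)) n : N) :=
    (Finset.sum_image (g := fun i : ℤ => j + i)
      (f := fun n => (decompose 𝒩 (f (decompose ℳ m j)) n : N))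
      (fun a _ b _ h => by simpa using h)).symm
  rw [h1]
  have hsub : (decompose 𝒩 (f (decompose ℳ m j))).support ⊆ s.image (fun i => j + i) := by
    intro n hn
    rw [DFinsupp.mem_support_iff] at hn
    have hn' : (decompose 𝒩 (f (decompose ℳ m j)) n : N) ≠ 0 := by
      simpa [ZeroMemClass.coe_eq_zero] using hn
    have hmj : ((decompose ℳ m j : M)) ≠ 0 := by
      rw [DFinsupp.mem_support_iff] at hj
      simpa [ZeroMemClass.coe_eq_zero] using hj
    have := hs j n hmj hn'
    exact Finset.mem_image.mpr ⟨n - j, this, by omega⟩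
  rw [← Finset.sum_subset hsub (fun n _ hn => by
    rw [DFinsupp.notMem_support_iff] at hn
    simp [hn])]
  exact DirectSum.sum_support_decompose 𝒩 _

end GradedAux

/-- Let `R` be an ℕ-graded ring (graded by `𝒜 : ℤ → AddSubgroup R`,
vanishing in negative degrees) with `𝒜 0` a field, and let `𝔪` be the homogeneous
maximal ideal (elements with vanishing degree-zero component), with `S` the
complementary multiplicative set. Let `M`, `N` be finitely generated graded
`R`-modules with `N` torsion-free. Any `R_𝔪`-linear map `φ : M_𝔪 → N_𝔪` is, up to a
unit of `R_𝔪`, the localization of an `R`-linear map `M → N` which is a finite sum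
of homogeneous maps. -/
theorem stmt_0 {R M N : Type} [CommRing R] [AddCommGroup M] [Module R M]
    [AddCommGroup N] [Module R N]
    (𝒜 : ℤ → AddSubgroup R) [GradedRing 𝒜]
    (hNNeg : ∀ i : ℤ, i < 0 → 𝒜 i = ⊥)
    (hfield : ∀ x ∈ 𝒜 0, x ≠ 0 → ∃ y ∈ 𝒜 0, x * y = 1)
    (𝔪 : Ideal R) (h𝔪 : ∀ x : R, x ∈ 𝔪 ↔ (DirectSum.decompose 𝒜 x 0 : R) = 0)
    (S : Submonoid R) (hS : ∀ x : R, x ∈ S ↔ x ∉ 𝔪)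
    (ℳ : ℤ → AddSubgroup M) (𝒩 : ℤ → AddSubgroup N)
    [DirectSum.Decomposition ℳ] [DirectSum.Decomposition 𝒩]
    [SetLike.GradedSMul 𝒜 ℳ] [SetLike.GradedSMul 𝒜 𝒩]
    (hMfin : Module.Finite R M) (hNfin : Module.Finite R N)
    (hNtf : ∀ (r : R) (n : N), r • n = 0 → r = 0 ∨ n = 0)
    (φ : LocalizedModule S M →ₗ[Localization S] LocalizedModule S N) :
    ∃ (s : Finset ℤ) (ψ : ℤ → (M →ₗ[R] N)) (u : (Localization S)ˣ),
      (∀ i ∈ s, ∀ (m : ℤ), ∀ x ∈ ℳ m, ψ i x ∈ 𝒩 (m + i)) ∧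
      ∀ y : LocalizedModule S M,
        LocalizedModule.map S (∑ i ∈ s, ψ i) y = (u : Localization S) • φ y := by
  classical
  -- elements of S are nonzero
  have hSne : ∀ s : S, (s : R) ≠ 0 := by
    intro s h
    have h0 : (0 : R) ∈ 𝔪 := (h𝔪 0).mpr (by simp)
    exact ((hS (s : R)).mp s.2) (h ▸ h0)
  -- the canonical map N → N_S is injective
  have hinj : Function.Injective (LocalizedModule.mkLinearMap S N) := by
    intro a b hab
    simp only [LocalizedModule.mkLinearMap_apply] at hab
    rw [LocalizedModule.mk_eq] at hab
    obtain ⟨u, hu⟩ := hab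
    simp only [one_smul, Submonoid.smul_def] at hu
    have h0 : (u : R) • (a - b) = 0 := by rw [smul_sub, hu, sub_self]
    rcases hNtf u (a - b) h0 with h | h
    · exact absurd h (hSne u)
    · exact sub_eq_zero.mp h
  obtain ⟨T, hT⟩ := hMfin.fg_top
  set f₀ : M →ₗ[R] LocalizedModule S N :=
    (φ.restrictScalars R).comp (LocalizedModule.mkLinearMap S M) with hf₀
  -- common denominator over the finite generating set
  have hcommon : ∀ T' : Finset M, ∃ s0 : S, ∀ v ∈ T',
      (s0 : R) • f₀ v ∈ LinearMap.range (LocalizedModule.mkLinearMap S N) := by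
    intro T'
    induction T' using Finset.induction with
    | empty => exact ⟨1, by simp⟩
    | @insert a t ha ih =>
      obtain ⟨s0, h0⟩ := ih
      obtain ⟨n, sa, hna⟩ : ∃ n sa, f₀ a = LocalizedModule.mk n sa :=
        LocalizedModule.induction_on (fun n sa => ⟨n, sa, rfl⟩) (f₀ a)
      refine ⟨sa * s0, fun v hv => ?_⟩
      rcases Finset.mem_insert.mp hv with rfl | hv
      · refine ⟨(s0 : R) • n, ?_⟩
        rw [LocalizedModule.mkLinearMap_apply, hna, LocalizedModule.smul'_mk]
        rw [show ((sa * s0 : S) : R) • n = sa • ((s0 : R) • n) by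
          rw [Submonoid.smul_def, Submonoid.coe_mul, mul_smul]]
        rw [LocalizedModule.mk_cancel]
      · obtain ⟨w, hw⟩ := h0 v hv
        refine ⟨(sa : R) • w, ?_⟩
        rw [map_smul, hw]
        rw [show ((sa * s0 : S) : R) • f₀ v = (sa : R) • ((s0 : R) • f₀ v) by
          rw [Submonoid.coe_mul, mul_smul]]
  obtain ⟨s0, hs0⟩ := hcommon T
  have hall : ∀ m : M, (s0 : R) • f₀ m ∈
      LinearMap.range (LocalizedModule.mkLinearMap S N) := by
    have hle : (⊤ : Submodule R M) ≤ Submodule.comap ((s0 : R) • f₀)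
        (LinearMap.range (LocalizedModule.mkLinearMap S N)) := by
      rw [← hT, Submodule.span_le]
      intro v hv
      simpa using hs0 v hv
    intro m
    simpa using hle (Submodule.mem_top (x := m))
  set e := LinearEquiv.ofInjective (LocalizedModule.mkLinearMap S N) hinj with he
  set g : M →ₗ[R] N := e.symm.toLinearMap.comp
    (((s0 : R) • f₀).codRestrict (LinearMap.range (LocalizedModule.mkLinearMap S N))
      (fun m => by simpa using hall m)) with hgdef
  have hg : ∀ m : M, LocalizedModule.mkLinearMap S N (g m) = (s0 : R) • f₀ m := by
    intro m
    have h1 : g m = e.symm ⟨(s0 : R) • f₀ m, hall m⟩ := by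
      simp [hgdef, LinearMap.codRestrict]
    have h2 : (e (g m) : LocalizedModule S N) = LocalizedModule.mkLinearMap S N (g m) :=
      LinearEquiv.ofInjective_apply _ _
    rw [← h2, h1, e.apply_symm_apply]
  -- the finite set of degrees
  set s : Finset ℤ := T.biUnion (fun v => (DirectSum.decompose ℳ v).support.biUnion
    (fun j => (DirectSum.decompose 𝒩 (g (DirectSum.decompose ℳ v j))).support.image
      (fun n => n - j))) with hsdef
  have hgsum : ∀ v ∈ T, ∑ i ∈ s, psi 𝒜 ℳ 𝒩 g i v = g v := by
    intro v hv
    refine psi_sum 𝒜 ℳ 𝒩 g v s (fun j n hj hn => ?_)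
    refine Finset.mem_biUnion.mpr ⟨v, hv, Finset.mem_biUnion.mpr ⟨j, ?_, ?_⟩⟩
    · rw [DFinsupp.mem_support_iff]
      exact fun h => hj (by rw [h]; rfl)
    · exact Finset.mem_image.mpr ⟨n, DFinsupp.mem_support_iff.mpr
        (fun h => hn (by rw [h]; rfl)), rfl⟩
  have hsum : (∑ i ∈ s, psi 𝒜 ℳ 𝒩 g i) = g := by
    refine LinearMap.ext_on hT (fun v hv => ?_)
    rw [LinearMap.sum_apply]
    exact hgsum v hv
  refine ⟨s, psi 𝒜 ℳ 𝒩 g, (IsLocalization.map_units (Localization S) s0).unit, ?_, ?_⟩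
  · intro i _ m x hx
    exact psi_mem 𝒜 ℳ 𝒩 g i hx
  · intro y
    rw [hsum, IsUnit.unit_spec]
    induction y using LocalizedModule.induction_on with
    | _ m τ =>
      rw [LocalizedModule.map_mk]
      have hu : IsUnit ((algebraMap R (Localization S)) (τ : R)) :=
        IsLocalization.map_units _ τ
      rw [← IsUnit.smul_left_cancel hu]
      have lhs : (algebraMap R (Localization S)) (τ : R) • LocalizedModule.mk (g m) τ
          = (s0 : R) • φ (LocalizedModule.mk m 1) := by
        rw [algebraMap_smul, LocalizedModule.smul'_mk, ← Submonoid.smul_def,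
          LocalizedModule.mk_cancel, ← LocalizedModule.mkLinearMap_apply, hg m]
        rfl
      have rhs : (algebraMap R (Localization S)) (τ : R) •
            ((algebraMap R (Localization S)) (s0 : R) • φ (LocalizedModule.mk m τ))
          = (s0 : R) • φ (LocalizedModule.mk m 1) := by
        rw [algebraMap_smul, algebraMap_smul, smul_comm ((τ : R)) ((s0 : R)),
          ← LinearMap.map_smul_of_tower, LocalizedModule.smul'_mk,
          ← Submonoid.smul_def τ m, LocalizedModule.mk_cancel]
      rw [lhs, rhs]
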